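/- Let c₀>0, α∈(0,1], β=√(1−α²), and let f:ℝ→ℂ be a solution of the profile ODE with energy E₀. Let z_∞ = lim_{s→+∞}|f(s)|² and let I := ∫₀^∞ e^{−(α+iβ)σ²/4}dσ (a convergent complex integral, equal to √π/√(α+iβ) for the square root with positive real part). Then |z_∞ − |f(0) + f'(0)·I|²| ≤ (√(2E₀)·c₀·π/α)·|f(0) + f'(0)·I| + (√(2E₀)·c₀·π/(2α))². -/

import Mathlib

open Real Filter MeasureTheory

/-- The profile ODE `f'' + (s/2)(α+iβ) f' + (c₀²/4) e^{-αs²/2} f = 0`, with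
`β = √(1-α²)`, encoded for a pair `(f, f')`. -/
def ProfileODE (c₀ α : ℝ) (f f' : ℝ → ℂ) : Prop :=
  ∀ s : ℝ,
    HasDerivAt f (f' s) s ∧
    HasDerivAt f'
      (-(((s : ℂ) / 2) * ((α : ℂ) + (Real.sqrt (1 - α ^ 2) : ℂ) * Complex.I) * f' s
        + ((c₀ ^ 2 / 4 : ℝ) : ℂ) * ((Real.exp (-α * s ^ 2 / 2) : ℝ) : ℂ) * f s)) s

noncomputable def nu (α : ℝ) : ℂ := (α : ℂ) + (Real.sqrt (1 - α ^ 2) : ℂ) * Complex.I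

noncomputable def phi (c₀ α : ℝ) (f : ℝ → ℂ) (s : ℝ) : ℂ :=
  -(((c₀ ^ 2 / 4 : ℝ)) : ℂ) * Complex.exp ((nu α - 2 * α) * (s : ℂ) ^ 2 / 4) * f s

lemma abs_exp_neg_nu (α : ℝ) (t : ℝ) :
    ‖Complex.exp (-nu α * (t : ℂ) ^ 2 / 4)‖ = Real.exp (-(α / 4) * t ^ 2) := by
  rw [Complex.norm_exp]
  congr 1
  have h : -nu α * (t : ℂ) ^ 2 / 4 =
      Complex.ofReal (-(α / 4) * t ^ 2) + Complex.ofReal (-(Real.sqrt (1 - α ^ 2) / 4) * t ^ 2) * Complex.I := by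
    unfold nu; push_cast; ring
  rw [h]
  simp [← Complex.ofReal_pow]

lemma abs_exp_nu_sub (α : ℝ) (t : ℝ) :
    ‖Complex.exp ((nu α - 2 * α) * (t : ℂ) ^ 2 / 4)‖ = Real.exp (-(α / 4) * t ^ 2) := by
  rw [Complex.norm_exp]
  congr 1
  have h : (nu α - 2 * α) * (t : ℂ) ^ 2 / 4 =
      Complex.ofReal (-(α / 4) * t ^ 2) + Complex.ofReal ((Real.sqrt (1 - α ^ 2) / 4) * t ^ 2) * Complex.I := by
    unfold nu; push_cast; ring
  rw [h]
  simp [← Complex.ofReal_pow]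

lemma exp_quad_hasDerivAt (ν : ℂ) (s : ℝ) :
    HasDerivAt (fun t : ℝ => Complex.exp (ν * (t : ℂ) ^ 2 / 4))
      (Complex.exp (ν * (s : ℂ) ^ 2 / 4) * (ν * s / 2)) s := by
  have h2 : HasDerivAt (fun z : ℂ => ν * z ^ 2 / 4) (ν * (s : ℂ) / 2) (s : ℂ) := by
    have := ((hasDerivAt_pow 2 (s : ℂ)).const_mul ν).div_const 4
    refine this.congr_deriv ?_
    ring
  exact (h2.cexp).comp_ofReal

lemma g_hasDerivAt {c₀ α : ℝ} {f f' : ℝ → ℂ} (h : ProfileODE c₀ α f f') (s : ℝ) :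
    HasDerivAt (fun t : ℝ => Complex.exp (nu α * (t : ℂ) ^ 2 / 4) * f' t)
      (phi c₀ α f s) s := by
  have hd := (exp_quad_hasDerivAt (nu α) s).mul (h s).2
  refine hd.congr_deriv ?_
  have he : Complex.exp ((nu α - 2 * α) * (s : ℂ) ^ 2 / 4) =
      Complex.exp (nu α * (s : ℂ) ^ 2 / 4) * ((Real.exp (-α * s ^ 2 / 2) : ℝ) : ℂ) := by
    rw [Complex.ofReal_exp, ← Complex.exp_add]
    congr 1
    push_cast
    ring
  unfold phi
  rw [he]
  unfold nu
  ring

lemma phi_continuous (c₀ α : ℝ) {f : ℝ → ℂ} (hfc : Continuous f) :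
    Continuous (phi c₀ α f) := by
  unfold phi
  exact (continuous_const.mul ((Complex.continuous_exp.comp (by continuity)))).mul hfc

lemma key_rep {c₀ α : ℝ} {f f' : ℝ → ℂ} (h : ProfileODE c₀ α f f')
    (hfc : Continuous f) (t : ℝ) :
    Complex.exp (nu α * (t : ℂ) ^ 2 / 4) * f' t - f' 0 =
      ∫ s in (0:ℝ)..t, phi c₀ α f s := by
  have := intervalIntegral.integral_eq_sub_of_hasDerivAt
    (f := fun t : ℝ => Complex.exp (nu α * (t : ℂ) ^ 2 / 4) * f' t)
    (fun s _ => g_hasDerivAt h s) ((phi_continuous c₀ α hfc).intervalIntegrable 0 t)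
  rw [this]
  norm_num

lemma abs_quad_est {a r b w : ℝ} (ha : 0 ≤ a) (hr : 0 ≤ r) (hb : 0 ≤ b) (hrb : r ≤ b)
    (hw1 : -(a * r) ≤ w) (hw2 : w ≤ a * r) :
    |a ^ 2 + r ^ 2 + 2 * w - a ^ 2| ≤ 2 * b * a + b ^ 2 := by
  have hsq : r ^ 2 ≤ b ^ 2 := by nlinarith
  have hcross : a * r ≤ a * b := mul_le_mul_of_nonneg_left hrb ha
  rw [abs_le]
  constructor <;> nlinarith

/-- For `α ∈ (0,1]`, estimate of `z_∞` in terms of the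
initial data: with `I = ∫₀^∞ e^{-(α+iβ)σ²/4} dσ`,
`|z_∞ − |f(0)+f'(0)I|²| ≤ (√(2E₀)c₀π/α)|f(0)+f'(0)I| + (√(2E₀)c₀π/(2α))²`. -/
theorem profileODE_zinf_estimate (c₀ α : ℝ) (hc₀ : 0 < c₀)
    (hα : α ∈ Set.Ioc (0 : ℝ) 1)
    (f f' : ℝ → ℂ) (h : ProfileODE c₀ α f f')
    (E₀ : ℝ)
    (hE : ∀ s : ℝ,
      (1 / 2) * (Real.exp (α * s ^ 2 / 2) * ‖f' s‖ ^ 2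
        + (c₀ ^ 2 / 4) * ‖f s‖ ^ 2) = E₀)
    (zinf : ℝ)
    (hz : Tendsto (fun s : ℝ => ‖f s‖ ^ 2) atTop (nhds zinf))
    (Iint : ℂ)
    (hI : Iint = ∫ σ in Set.Ioi (0 : ℝ),
      Complex.exp (-((α : ℂ) + (Real.sqrt (1 - α ^ 2) : ℂ) * Complex.I)
        * (σ : ℂ) ^ 2 / 4)) :
    |zinf - ‖f 0 + f' 0 * Iint‖ ^ 2|
      ≤ (Real.sqrt (2 * E₀) * c₀ * Real.pi / α)
          * ‖f 0 + f' 0 * Iint‖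
        + (Real.sqrt (2 * E₀) * c₀ * Real.pi / (2 * α)) ^ 2 := by
  have hα0 : 0 < α := hα.1
  set K := Real.sqrt (2 * E₀) with hKdef
  have hE0 : 0 ≤ E₀ := by
    rw [← hE 0]
    positivity
  have hK0 : 0 ≤ K := Real.sqrt_nonneg _
  have hKsq : K ^ 2 = 2 * E₀ := Real.sq_sqrt (by linarith)
  -- continuity
  have hfc : Continuous f := by
    rw [continuous_iff_continuousAt]; exact fun s => (h s).1.continuousAt
  have hf'c : Continuous f' := by
    rw [continuous_iff_continuousAt]; exact fun s => (h s).2.continuousAt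
  -- pointwise bounds
  have hf'b : ∀ s : ℝ, ‖f' s‖ ≤ K * Real.exp (-(α / 4) * s ^ 2) := by
    intro s
    have hnn : 0 ≤ (c₀ ^ 2 / 4) * ‖f s‖ ^ 2 := by positivity
    have h1 : Real.exp (α * s ^ 2 / 2) * ‖f' s‖ ^ 2 ≤ 2 * E₀ := by
      have := hE s; linarith
    have hep := Real.exp_pos (α * s ^ 2 / 2)
    have hes : Real.exp (-(α / 4) * s ^ 2) ^ 2 * Real.exp (α * s ^ 2 / 2) = 1 := by
      rw [pow_two, ← Real.exp_add, ← Real.exp_add,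
        show -(α / 4) * s ^ 2 + -(α / 4) * s ^ 2 + α * s ^ 2 / 2 = 0 by ring, Real.exp_zero]
    have h3 : (K * Real.exp (-(α / 4) * s ^ 2)) ^ 2 = 2 * E₀ / Real.exp (α * s ^ 2 / 2) := by
      rw [mul_pow, hKsq, eq_div_iff (ne_of_gt hep), mul_assoc, hes, mul_one]
    have h2 : ‖f' s‖ ^ 2 ≤ (K * Real.exp (-(α / 4) * s ^ 2)) ^ 2 := by
      rw [h3, le_div_iff₀ hep]
      nlinarith
    have h4 := Real.sqrt_le_sqrt h2
    rwa [Real.sqrt_sq (norm_nonneg _), Real.sqrt_sq (by positivity)] at h4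
  have hfb : ∀ s : ℝ, ‖f s‖ ≤ 2 * K / c₀ := by
    intro s
    have hnn : 0 ≤ Real.exp (α * s ^ 2 / 2) * ‖f' s‖ ^ 2 := by positivity
    have h1 : (c₀ ^ 2 / 4) * ‖f s‖ ^ 2 ≤ 2 * E₀ := by
      have := hE s; linarith
    have h2 : ‖f s‖ ^ 2 ≤ (2 * K / c₀) ^ 2 := by
      rw [div_pow, mul_pow, hKsq, le_div_iff₀ (by positivity)]
      nlinarith
    have h4 := Real.sqrt_le_sqrt h2
    rwa [Real.sqrt_sq (norm_nonneg _), Real.sqrt_sq (by positivity)] at h4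
  -- gaussian integrability and value
  have hgauss : Integrable (fun s : ℝ => Real.exp (-(α / 4) * s ^ 2)) := by
    exact integrable_exp_neg_mul_sq (by linarith)
  have hgaussIoi : IntegrableOn (fun s : ℝ => Real.exp (-(α / 4) * s ^ 2)) (Set.Ioi 0) :=
    hgauss.integrableOn
  set G := Real.sqrt (π / α) with hGdef
  have hG0 : 0 ≤ G := Real.sqrt_nonneg _
  have hGG : G * G = π / α := Real.mul_self_sqrt (by positivity)
  have hGval : ∫ s in Set.Ioi (0:ℝ), Real.exp (-(α / 4) * s ^ 2) = G := by
    rw [integral_gaussian_Ioi (α / 4), hGdef]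
    rw [show π / (α / 4) = 4 * (π / α) by field_simp, Real.sqrt_mul (by norm_num : (0:ℝ) ≤ 4),
      show Real.sqrt 4 = 2 by
        rw [show (4:ℝ) = 2 ^ 2 by norm_num, Real.sqrt_sq (by norm_num : (0:ℝ) ≤ 2)]]
    ring
  -- bound on the primitive of phi
  have hphile : ∀ s : ℝ, ‖phi c₀ α f s‖ ≤ (c₀ * K / 2) * Real.exp (-(α / 4) * s ^ 2) := by
    intro s
    unfold phi
    rw [norm_mul, norm_mul, abs_exp_nu_sub]
    have h1 : ‖-(((c₀ ^ 2 / 4 : ℝ)) : ℂ)‖ = c₀ ^ 2 / 4 := by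
      rw [norm_neg, Complex.norm_real, Real.norm_eq_abs, abs_of_nonneg (by positivity)]
    rw [h1]
    have h2 := hfb s
    calc c₀ ^ 2 / 4 * Real.exp (-(α / 4) * s ^ 2) * ‖f s‖
        ≤ c₀ ^ 2 / 4 * Real.exp (-(α / 4) * s ^ 2) * (2 * K / c₀) := by
          apply mul_le_mul_of_nonneg_left h2 (by positivity)
      _ = (c₀ * K / 2) * Real.exp (-(α / 4) * s ^ 2) := by field_simp; ring
  have hprim : ∀ t : ℝ, 0 ≤ t →
      ‖∫ s in (0:ℝ)..t, phi c₀ α f s‖ ≤ (c₀ * K / 2) * G := by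
    intro t ht
    have h1 : ‖∫ s in (0:ℝ)..t, phi c₀ α f s‖ ≤ ∫ s in (0:ℝ)..t, ‖phi c₀ α f s‖ :=
      intervalIntegral.norm_integral_le_integral_norm ht
    have h2 : ∫ s in (0:ℝ)..t, ‖phi c₀ α f s‖
        ≤ ∫ s in (0:ℝ)..t, (c₀ * K / 2) * Real.exp (-(α / 4) * s ^ 2) := by
      apply intervalIntegral.integral_mono_on ht
        ((phi_continuous c₀ α hfc).norm.intervalIntegrable 0 t)
        ((continuous_const.mul (by continuity)).intervalIntegrable 0 t)
      intro x _
      exact hphile x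
    have h3 : ∫ s in (0:ℝ)..t, (c₀ * K / 2) * Real.exp (-(α / 4) * s ^ 2)
        ≤ (c₀ * K / 2) * G := by
      rw [intervalIntegral.integral_const_mul]
      apply mul_le_mul_of_nonneg_left _ (by positivity)
      rw [intervalIntegral.integral_of_le ht, ← hGval]
      apply setIntegral_mono_set hgaussIoi
        (Filter.Eventually.of_forall fun x => (Real.exp_pos _).le)
        (HasSubset.Subset.eventuallyLE Set.Ioc_subset_Ioi_self)
    calc ‖∫ s in (0:ℝ)..t, phi c₀ α f s‖
        = ‖∫ s in (0:ℝ)..t, phi c₀ α f s‖ := rfl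
      _ ≤ ∫ s in (0:ℝ)..t, ‖phi c₀ α f s‖ := h1
      _ ≤ ∫ s in (0:ℝ)..t, (c₀ * K / 2) * Real.exp (-(α / 4) * s ^ 2) := h2
      _ ≤ (c₀ * K / 2) * G := h3
  -- the representation of f'
  have hkey : ∀ t : ℝ, f' t = Complex.exp (-nu α * (t : ℂ) ^ 2 / 4) * f' 0
      + Complex.exp (-nu α * (t : ℂ) ^ 2 / 4) * (∫ s in (0:ℝ)..t, phi c₀ α f s) := by
    intro t
    have h1 := key_rep h hfc t
    have h2 : Complex.exp (-nu α * (t : ℂ) ^ 2 / 4) * Complex.exp (nu α * (t : ℂ) ^ 2 / 4) = 1 := by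
      rw [← Complex.exp_add, show -nu α * (t : ℂ) ^ 2 / 4 + nu α * (t : ℂ) ^ 2 / 4 = 0 by ring,
        Complex.exp_zero]
    calc f' t = (Complex.exp (-nu α * (t : ℂ) ^ 2 / 4) * Complex.exp (nu α * (t : ℂ) ^ 2 / 4)) * f' t := by
          rw [h2, one_mul]
      _ = Complex.exp (-nu α * (t : ℂ) ^ 2 / 4) * (f' 0 + (Complex.exp (nu α * (t : ℂ) ^ 2 / 4) * f' t - f' 0)) := by ring
      _ = _ := by rw [h1]; ring
  -- the remainder function
  set h0 : ℝ → ℂ := fun t => f' t - Complex.exp (-nu α * (t : ℂ) ^ 2 / 4) * f' 0 with h0def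
  have hh0b : ∀ t : ℝ, 0 ≤ t →
      ‖h0 t‖ ≤ ((c₀ * K / 2) * G) * Real.exp (-(α / 4) * t ^ 2) := by
    intro t ht
    have h1 : h0 t = Complex.exp (-nu α * (t : ℂ) ^ 2 / 4) * (∫ s in (0:ℝ)..t, phi c₀ α f s) := by
      rw [h0def]; simp only; rw [hkey t]; ring
    rw [h1, norm_mul, abs_exp_neg_nu]
    rw [mul_comm ((c₀ * K / 2) * G)]
    exact mul_le_mul_of_nonneg_left (hprim t ht) (Real.exp_pos _).le
  -- integrability on Ioi 0
  have hint_f' : IntegrableOn f' (Set.Ioi 0) := by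
    apply Integrable.mono (hgaussIoi.const_mul K) (hf'c.aestronglyMeasurable.restrict)
    apply Filter.Eventually.of_forall
    intro s
    rw [Real.norm_eq_abs, abs_of_nonneg (by positivity)]
    exact hf'b s
  have hce : Continuous fun t : ℝ => Complex.exp (-nu α * (t : ℂ) ^ 2 / 4) :=
    Complex.continuous_exp.comp ((continuous_const.mul (Complex.continuous_ofReal.pow 2)).div_const 4)
  have hint_exp : IntegrableOn (fun t : ℝ => Complex.exp (-nu α * (t : ℂ) ^ 2 / 4) * f' 0)
      (Set.Ioi 0) := by
    apply Integrable.mono (hgaussIoi.mul_const (‖f' 0‖))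
      ((hce.mul continuous_const).aestronglyMeasurable.restrict)
    apply Filter.Eventually.of_forall
    intro s
    simp only [Pi.mul_apply]
    rw [norm_mul (Complex.exp _), abs_exp_neg_nu, Real.norm_eq_abs,
      abs_of_nonneg (mul_nonneg (Real.exp_pos _).le (norm_nonneg _))]
  have hint_h0 : IntegrableOn h0 (Set.Ioi 0) := hint_f'.sub hint_exp
  -- splitting the improper integral of f'
  set R : ℂ := ∫ t in Set.Ioi (0:ℝ), h0 t with hRdef
  have hIeq : Iint = ∫ t in Set.Ioi (0:ℝ), Complex.exp (-nu α * (t : ℂ) ^ 2 / 4) := by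
    rw [hI]; rfl
  have hsplit : ∫ t in Set.Ioi (0:ℝ), f' t = Iint * f' 0 + R := by
    have h1 : ∫ t in Set.Ioi (0:ℝ), h0 t
        = (∫ t in Set.Ioi (0:ℝ), f' t)
          - ∫ t in Set.Ioi (0:ℝ), Complex.exp (-nu α * (t : ℂ) ^ 2 / 4) * f' 0 :=
      integral_sub hint_f' hint_exp
    have h2 : ∫ t in Set.Ioi (0:ℝ), Complex.exp (-nu α * (t : ℂ) ^ 2 / 4) * f' 0
        = Iint * f' 0 := by
      rw [integral_mul_const, ← hIeq]
    rw [← hRdef] at h1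
    rw [← h2]
    rw [eq_sub_iff_add_eq] at h1
    linear_combination -h1
  -- bound on R
  have hRbound : ‖R‖ ≤ (c₀ * K / 2) * (π / α) := by
    have h1 : ‖R‖ ≤ ∫ t in Set.Ioi (0:ℝ), ((c₀ * K / 2) * G) * Real.exp (-(α / 4) * t ^ 2) := by
      apply norm_integral_le_of_norm_le (hgaussIoi.const_mul _)
      filter_upwards [ae_restrict_mem measurableSet_Ioi] with t ht
      exact hh0b t ht.le
    rw [integral_const_mul, hGval] at h1
    calc ‖R‖ = ‖R‖ := rfl
      _ ≤ (c₀ * K / 2) * G * G := h1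
      _ = (c₀ * K / 2) * (π / α) := by rw [mul_assoc, hGG]
  -- limit of f
  have hfFTC : ∀ t : ℝ, f t = f 0 + ∫ s in (0:ℝ)..t, f' s := by
    intro t
    have := intervalIntegral.integral_eq_sub_of_hasDerivAt
      (f := f) (fun s _ => (h s).1) (hf'c.intervalIntegrable 0 t)
    rw [this]; ring
  have hftend : Tendsto f atTop (nhds (f 0 + ∫ t in Set.Ioi (0:ℝ), f' t)) := by
    have h1 := intervalIntegral_tendsto_integral_Ioi 0 hint_f' tendsto_id
    exact (tendsto_const_nhds.add h1).congr fun t => (hfFTC t).symm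
  have hzeq : zinf = ‖f 0 + ∫ t in Set.Ioi (0:ℝ), f' t‖ ^ 2 := by
    refine tendsto_nhds_unique hz ?_
    exact ((continuous_norm.tendsto _).comp hftend).pow 2
  -- final algebra
  set A : ℂ := f 0 + f' 0 * Iint with hAdef
  have hzeq2 : zinf = ‖A + R‖ ^ 2 := by
    have harr : f 0 + (Iint * f' 0 + R) = A + R := by rw [hAdef]; ring
    rw [hzeq, hsplit, harr]
  set B : ℝ := K * c₀ * π / (2 * α) with hBdef
  have hRB : ‖R‖ ≤ B := by
    have heq : (c₀ * K / 2) * (π / α) = K * c₀ * π / (2 * α) := by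
      rw [div_mul_div_comm, mul_comm c₀ K]
    exact hRbound.trans (le_of_eq (heq.trans hBdef.symm))
  have hB0 : 0 ≤ B := by rw [hBdef]; positivity
  have hA0 : 0 ≤ ‖A‖ := norm_nonneg _
  have hR0 : 0 ≤ ‖R‖ := norm_nonneg _
  have hexpand : ‖A + R‖ ^ 2
      = ‖A‖ ^ 2 + ‖R‖ ^ 2 + 2 * (A * (starRingEnd ℂ) R).re := by
    rw [Complex.sq_norm, Complex.sq_norm, Complex.sq_norm, Complex.normSq_add]
  have hre : |(A * (starRingEnd ℂ) R).re| ≤ ‖A‖ * ‖R‖ := by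
    refine (Complex.abs_re_le_norm _).trans (le_of_eq ?_)
    rw [norm_mul, Complex.norm_conj]
  have hre1 := (abs_le.mp hre).1
  have hre2 := (abs_le.mp hre).2
  have hgoal : |zinf - ‖A‖ ^ 2| ≤ 2 * B * ‖A‖ + B ^ 2 := by
    rw [hzeq2, hexpand]
    exact abs_quad_est hA0 hR0 hB0 hRB hre1 hre2
  refine hgoal.trans (le_of_eq ?_)
  have h2B : 2 * B = K * c₀ * π / α := by
    rw [hBdef, show (2:ℝ) * α = α * 2 by ring, ← div_div]
    ring
  rw [h2B]
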